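/- For n qubits and s ∈ [0,1], let H^B_s = Σ_{k=1}^n (h_s)_k act on ℂ^{2^n}, where (h_s)_k applies the 2×2 matrix h_s = (1−s)|−⟩⟨−| + s|1⟩⟨1| to the k-th qubit and the identity to all other qubits. Then the eigenvalues of H^B_s are exactly λ_ℓ(s) = (n−ℓ)λ₊(s) + ℓλ₋(s) for ℓ ∈ {0,1,…,n}, where λ_±(s) = (1 ± √(1 − 2s + 2s²))/2, the gap between the second-smallest and smallest eigenvalues of H^B_s is √(1 − 2s + 2s²), and the minimum of this gap over s ∈ [0,1] equals 1/√2. -/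

import Mathlib

open Matrix

/-- The eigenvalues of a Hermitian matrix, sorted in nondecreasing order
(counted with multiplicity). -/
noncomputable def sortedEigs {m : Type*} [Fintype m] [DecidableEq m] {A : Matrix m m ℂ}
    (hA : A.IsHermitian) : Fin (Fintype.card m) → ℝ :=
  hA.eigenvalues₀ ∘ Tuple.sort hA.eigenvalues₀

/-- The single-qubit matrix `h` acting on the `k`-th of `n` qubits (identity elsewhere),
as a matrix on the `n`-fold tensor product `ℂ^{2^n}`, whose computational basis is indexed
by `Fin n → Fin 2`. -/
def onQubit (n : ℕ) (k : Fin n) (h : Matrix (Fin 2) (Fin 2) ℂ) :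
    Matrix (Fin n → Fin 2) (Fin n → Fin 2) ℂ :=
  Matrix.of fun x y => h (x k) (y k) * ∏ j ∈ Finset.univ.erase k, (if x j = y j then 1 else 0)

section AuxGeneral

lemma aux_det_conj {m : Type*} [Fintype m] [DecidableEq m]
    (U : Matrix m m ℂ) (hU : U * Uᴴ = 1) (d : m → ℂ) (t : ℂ) :
    (t • (1 : Matrix m m ℂ) - U * Matrix.diagonal d * Uᴴ).det = ∏ i, (t - d i) := by
  have h1 : t • (1 : Matrix m m ℂ) - U * Matrix.diagonal d * Uᴴ
      = U * (t • (1 : Matrix m m ℂ) - Matrix.diagonal d) * Uᴴ := by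
    rw [Matrix.mul_sub, Matrix.sub_mul]
    congr 1
    rw [Matrix.mul_smul, Matrix.mul_one, Matrix.smul_mul, hU]
  have h2 : t • (1 : Matrix m m ℂ) - Matrix.diagonal d
      = Matrix.diagonal (fun i => t - d i) := by
    rw [smul_eq_diagonal_mul, Matrix.mul_one, ← Matrix.diagonal_sub]
  rw [h1, h2, Matrix.det_mul, Matrix.det_mul, mul_comm (U.det), mul_assoc, ← Matrix.det_mul, hU,
    Matrix.det_one, mul_one, Matrix.det_diagonal]

lemma aux_multiset_eq {m₁ m₂ : Type*} [Fintype m₁] [Fintype m₂]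
    (e : m₁ → ℂ) (d : m₂ → ℂ)
    (hp : ∀ t : ℂ, ∏ i, (t - e i) = ∏ i, (t - d i)) :
    Multiset.map e Finset.univ.val = Multiset.map d Finset.univ.val := by
  have key : ((Multiset.map e Finset.univ.val).map
        (fun a => Polynomial.X - Polynomial.C a)).prod
      = ((Multiset.map d Finset.univ.val).map
        (fun a => Polynomial.X - Polynomial.C a)).prod := by
    apply Polynomial.funext
    intro t
    have h1 : Polynomial.eval t ((Multiset.map e Finset.univ.val).map
          (fun a => Polynomial.X - Polynomial.C a)).prod = ∏ i, (t - e i) := by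
      rw [Polynomial.eval_multiset_prod, Multiset.map_map, Multiset.map_map,
        Finset.prod_eq_multiset_prod]
      congr 1
      apply Multiset.map_congr rfl
      intro i _
      simp
    have h2 : Polynomial.eval t ((Multiset.map d Finset.univ.val).map
          (fun a => Polynomial.X - Polynomial.C a)).prod = ∏ i, (t - d i) := by
      rw [Polynomial.eval_multiset_prod, Multiset.map_map, Multiset.map_map,
        Finset.prod_eq_multiset_prod]
      congr 1
      apply Multiset.map_congr rfl
      intro i _
      simp
    rw [h1, h2]
    exact hp t
  have := congrArg Polynomial.roots key
  rwa [Polynomial.roots_multiset_prod_X_sub_C, Polynomial.roots_multiset_prod_X_sub_C] at this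

lemma aux_equiv_multiset {α β γ : Type*} [Fintype α] [Fintype β] (f : β → γ) (σ : α ≃ β) :
    Multiset.map (f ∘ σ) Finset.univ.val = Multiset.map f Finset.univ.val := by
  have h : Finset.univ.val.map (σ : α → β) = Finset.univ.val := by
    have := congrArg Finset.val (Finset.map_univ_equiv σ)
    simpa [Finset.map] using this
  calc Multiset.map (f ∘ σ) Finset.univ.val
      = Multiset.map f (Finset.univ.val.map (σ : α → β)) := by rw [Multiset.map_map]
    _ = Multiset.map f Finset.univ.val := by rw [h]

lemma aux_eig_multiset {m : Type*} [Fintype m] [DecidableEq m] {A : Matrix m m ℂ}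
    (hA : A.IsHermitian) (U : Matrix m m ℂ) (hU : U * Uᴴ = 1) (d : m → ℝ)
    (hAeq : A = U * Matrix.diagonal (fun i => (d i : ℂ)) * Uᴴ) :
    Multiset.map hA.eigenvalues₀ Finset.univ.val = Multiset.map d Finset.univ.val := by
  have hV : (hA.eigenvectorUnitary : Matrix m m ℂ)
      * (hA.eigenvectorUnitary : Matrix m m ℂ)ᴴ = 1 := by
    rw [← Matrix.star_eq_conjTranspose]
    exact Unitary.mul_star_self_of_mem hA.eigenvectorUnitary.2
  have hAeq' : A = (hA.eigenvectorUnitary : Matrix m m ℂ)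
      * Matrix.diagonal (fun i => ((hA.eigenvalues i : ℝ) : ℂ))
      * (hA.eigenvectorUnitary : Matrix m m ℂ)ᴴ := by
    have := hA.spectral_theorem
    rw [Unitary.conjStarAlgAut_apply, Matrix.star_eq_conjTranspose] at this
    exact this
  have hp : ∀ t : ℂ, ∏ i, (t - ((hA.eigenvalues i : ℝ) : ℂ)) = ∏ i, (t - ((d i : ℝ) : ℂ)) := by
    intro t
    rw [← aux_det_conj _ hV _ t, ← aux_det_conj U hU _ t, ← hAeq', ← hAeq]
  have hms := aux_multiset_eq (fun i => ((hA.eigenvalues i : ℝ) : ℂ))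
    (fun i => ((d i : ℝ) : ℂ)) hp
  have hms2 : Multiset.map ((fun x : ℝ => (x : ℂ)) ∘ hA.eigenvalues) Finset.univ.val
      = Multiset.map ((fun x : ℝ => (x : ℂ)) ∘ d) Finset.univ.val := hms
  rw [← Multiset.map_map, ← Multiset.map_map] at hms2
  have hreal : Multiset.map hA.eigenvalues Finset.univ.val = Multiset.map d Finset.univ.val :=
    Multiset.map_injective Complex.ofReal_injective hms2
  have he : hA.eigenvalues
      = hA.eigenvalues₀ ∘ (Fintype.equivOfCardEq (Fintype.card_fin _)).symm := rfl
  rw [he, aux_equiv_multiset] at hreal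
  exact hreal

lemma aux_sorted_entries {N : ℕ} (φ : Fin N → ℝ) (hmono : Monotone φ)
    (M : Multiset ℝ) (hM : Multiset.map φ Finset.univ.val = M)
    (m b : ℝ) (hmb : m < b) (hmem : m ∈ M) (hbmem : b ∈ M)
    (hcount : Multiset.count m M = 1)
    (hall : ∀ a ∈ M, a = m ∨ b ≤ a)
    (i0 i1 : Fin N) (h0 : (i0 : ℕ) = 0) (h1 : (i1 : ℕ) = 1) :
    φ i0 = m ∧ φ i1 = b := by
  have hmemφ : ∀ a, a ∈ M ↔ ∃ i, φ i = a := by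
    intro a
    rw [← hM, Multiset.mem_map]
    simp
  have hi01 : i0 < i1 := by
    rw [Fin.lt_iff_val_lt_val, h0, h1]; norm_num
  obtain ⟨j, hj⟩ := (hmemφ m).1 hmem
  have h0min : φ i0 ≤ m := by
    rw [← hj]
    apply hmono
    rw [Fin.le_iff_val_le_val, h0]; omega
  have h0m : φ i0 = m := by
    rcases hall _ ((hmemφ _).2 ⟨i0, rfl⟩) with h | h
    · exact h
    · linarith
  refine ⟨h0m, ?_⟩
  have h1ge : b ≤ φ i1 := by
    rcases hall _ ((hmemφ _).2 ⟨i1, rfl⟩) with h | h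
    · exfalso
      have hsub : ({i0, i1} : Finset (Fin N)) ⊆ Finset.univ.filter (fun i => m = φ i) := by
        intro i hi
        simp only [Finset.mem_insert, Finset.mem_singleton] at hi
        rcases hi with rfl | rfl
        · exact Finset.mem_filter.2 ⟨Finset.mem_univ _, h0m.symm⟩
        · exact Finset.mem_filter.2 ⟨Finset.mem_univ _, h.symm⟩
      have hcard : 2 ≤ (Finset.univ.filter (fun i => m = φ i)).card := by
        have := Finset.card_le_card hsub
        rwa [Finset.card_insert_of_notMem (by simp [Fin.ne_of_lt hi01]),
          Finset.card_singleton] at this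
      have : Multiset.count m M = (Finset.univ.filter (fun i => m = φ i)).card := by
        rw [← hM, Multiset.count_map]
        rfl
      omega
    · exact h
  obtain ⟨j', hj'⟩ := (hmemφ b).1 hbmem
  have hj'ne : j' ≠ i0 := by
    intro hEq
    rw [hEq, h0m] at hj'
    linarith
  have hle : i1 ≤ j' := by
    rw [Fin.le_iff_val_le_val, h1]
    have : (j' : ℕ) ≠ 0 := by
      intro hc
      apply hj'ne
      apply Fin.ext
      rw [hc, h0]
    omega
  have := hmono hle
  rw [hj'] at this
  linarith

lemma aux_card (n ℓ : ℕ) (hl : ℓ ≤ n) :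
    (Finset.univ.filter (fun j : Fin n => (j : ℕ) < ℓ)).card = ℓ := by
  rcases eq_or_lt_of_le hl with rfl | hlt
  · rw [Finset.filter_true_of_mem (fun j _ => j.isLt)]
    simp
  · have : (Finset.univ.filter (fun j : Fin n => (j : ℕ) < ℓ)) = Finset.Iio ⟨ℓ, hlt⟩ := by
      ext j
      simp [Finset.mem_Iio, Fin.lt_iff_val_lt_val]
    rw [this, Fin.card_Iio]

end AuxGeneral

/-- The `n`-fold tensor power of a 2×2 matrix. -/
def bigU (n : ℕ) (U1 : Matrix (Fin 2) (Fin 2) ℂ) :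
    Matrix (Fin n → Fin 2) (Fin n → Fin 2) ℂ :=
  Matrix.of fun x y => ∏ k, U1 (x k) (y k)

lemma aux_onQubit_mul_bigU (n : ℕ) (k : Fin n) (A U1 : Matrix (Fin 2) (Fin 2) ℂ)
    (dd : Fin 2 → ℂ) (hcomm : A * U1 = U1 * Matrix.diagonal dd) :
    onQubit n k A * bigU n U1 = bigU n U1 * Matrix.diagonal (fun y => dd (y k)) := by
  ext x y
  rw [Matrix.mul_apply, Matrix.mul_diagonal]
  have hzero : ∀ z ∈ Finset.univ,
      z ∉ Finset.univ.image (fun t => Function.update x k t) →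
      onQubit n k A x z * bigU n U1 z y = 0 := by
    intro z _ hz
    have : ∃ j, j ≠ k ∧ z j ≠ x j := by
      by_contra hc
      push_neg at hc
      apply hz
      refine Finset.mem_image.2 ⟨z k, Finset.mem_univ _, ?_⟩
      funext j
      by_cases hj : j = k
      · subst hj; rw [Function.update_self]
      · rw [Function.update_of_ne hj]
        exact (hc j hj).symm
    obtain ⟨j, hjk, hjz⟩ := this
    have : (∏ j' ∈ Finset.univ.erase k, if x j' = z j' then (1 : ℂ) else 0) = 0 := by
      apply Finset.prod_eq_zero (Finset.mem_erase.2 ⟨hjk, Finset.mem_univ _⟩)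
      rw [if_neg (fun hh => hjz hh.symm)]
    simp only [onQubit, bigU, Matrix.of_apply, this, mul_zero, zero_mul]
  rw [← Finset.sum_subset (Finset.subset_univ _) hzero]
  rw [Finset.sum_image (by
    intro t1 _ t2 _ hEq
    have := congrFun hEq k
    simpa using this)]
  have hterm : ∀ t : Fin 2,
      onQubit n k A x (Function.update x k t) * bigU n U1 (Function.update x k t) y
      = A (x k) t * U1 t (y k) * ∏ j ∈ Finset.univ.erase k, U1 (x j) (y j) := by
    intro t
    simp only [onQubit, bigU, Matrix.of_apply]
    have hδ : (∏ j ∈ Finset.univ.erase k, if x j = Function.update x k t j then (1 : ℂ) else 0)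
        = 1 := by
      apply Finset.prod_eq_one
      intro j hj
      rw [Function.update_of_ne (Finset.mem_erase.1 hj).1, if_pos rfl]
    have hsplit : (∏ j, U1 (Function.update x k t j) (y j))
        = U1 t (y k) * ∏ j ∈ Finset.univ.erase k, U1 (x j) (y j) := by
      rw [← Finset.mul_prod_erase Finset.univ _ (Finset.mem_univ k), Function.update_self]
      congr 1
      apply Finset.prod_congr rfl
      intro j hj
      rw [Function.update_of_ne (Finset.mem_erase.1 hj).1]
    rw [Function.update_self, hδ, mul_one, hsplit, mul_assoc]
  rw [Finset.sum_congr rfl (fun t _ => hterm t), ← Finset.sum_mul]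
  have hAU : (∑ t : Fin 2, A (x k) t * U1 t (y k)) = U1 (x k) (y k) * dd (y k) := by
    have := congrFun (congrFun hcomm (x k)) (y k)
    rw [Matrix.mul_apply, Matrix.mul_diagonal] at this
    exact this
  rw [hAU]
  simp only [bigU, Matrix.of_apply]
  rw [mul_comm (U1 (x k) (y k)) (dd (y k)), mul_assoc]
  rw [← Finset.mul_prod_erase Finset.univ (fun j => U1 (x j) (y j)) (Finset.mem_univ k)]
  ring

lemma aux_bigU_unitary (n : ℕ) (U1 : Matrix (Fin 2) (Fin 2) ℂ) (hU1 : U1ᴴ * U1 = 1) :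
    (bigU n U1)ᴴ * bigU n U1 = 1 := by
  ext x y
  rw [Matrix.mul_apply]
  simp only [Matrix.conjTranspose_apply, bigU, Matrix.of_apply, star_prod]
  have hfac : ∀ z : Fin n → Fin 2,
      (∏ k, star (U1 (z k) (x k))) * ∏ k, U1 (z k) (y k)
      = ∏ k, (star (U1 (z k) (x k)) * U1 (z k) (y k)) := by
    intro z
    rw [← Finset.prod_mul_distrib]
  rw [Finset.sum_congr rfl (fun z _ => hfac z)]
  rw [← Fintype.piFinset_univ,
    ← Finset.prod_univ_sum (fun _ : Fin n => (Finset.univ : Finset (Fin 2)))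
      (fun k t => star (U1 t (x k)) * U1 t (y k))]
  have hone : ∀ k : Fin n, (∑ t : Fin 2, star (U1 t (x k)) * U1 t (y k))
      = if x k = y k then 1 else 0 := by
    intro k
    have := congrFun (congrFun hU1 (x k)) (y k)
    rw [Matrix.mul_apply] at this
    simp only [Matrix.conjTranspose_apply] at this
    rw [this, Matrix.one_apply]
  rw [Finset.prod_congr rfl (fun k _ => hone k)]
  rw [Matrix.one_apply]
  by_cases hxy : x = y
  · subst hxy; simp
  · have : ∃ k, x k ≠ y k := by
      by_contra hc
      push_neg at hc
      exact hxy (funext hc)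
    obtain ⟨k, hk⟩ := this
    rw [if_neg hxy]
    exact Finset.prod_eq_zero (Finset.mem_univ k) (if_neg hk)

set_option maxHeartbeats 1000000 in
lemma aux_2x2 (s : ℝ) :
    ∃ U1 : Matrix (Fin 2) (Fin 2) ℂ, U1ᴴ * U1 = 1 ∧
      (!![(((1-s)/2 : ℝ) : ℂ), ((-((1-s)/2) : ℝ) : ℂ);
          ((-((1-s)/2) : ℝ) : ℂ), (((1+s)/2 : ℝ) : ℂ)]) * U1
      = U1 * Matrix.diagonal
          (fun t : Fin 2 => (((if t = (0 : Fin 2) then (1 + Real.sqrt (1-2*s+2*s^2))/2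
            else (1 - Real.sqrt (1-2*s+2*s^2))/2) : ℝ) : ℂ)) := by
  set g := Real.sqrt (1-2*s+2*s^2) with hgdef
  have hd : (0:ℝ) ≤ 1-2*s+2*s^2 := by nlinarith [sq_nonneg (2*s-1)]
  have hg2 : g^2 = 1-2*s+2*s^2 := Real.sq_sqrt hd
  have hg0 : 0 ≤ g := Real.sqrt_nonneg _
  have hgpos : 0 < g := by nlinarith [sq_nonneg (2*s-1)]
  have hgs : 0 < g + s := by nlinarith [sq_nonneg (1-s)]
  set r := Real.sqrt (g*(g+s)/2) with hrdef
  have hr2 : r^2 = g*(g+s)/2 := Real.sq_sqrt (by positivity)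
  have hrpos : 0 < r := Real.sqrt_pos.2 (by positivity)
  set p := -(1-s)/(2*r) with hpdef
  set q := (s+g)/(2*r) with hqdef
  have hpq : p^2 + q^2 = 1 := by
    rw [hpdef, hqdef]
    field_simp
    nlinarith [hr2, hg2]
  clear_value g r p q
  refine ⟨!![(p:ℂ), ((-q : ℝ):ℂ); ((q:ℝ):ℂ), (p:ℂ)], ?_, ?_⟩
  · ext i j
    fin_cases i <;> fin_cases j <;>
      simp [Matrix.mul_apply, Fin.sum_univ_two, Matrix.one_apply, ← Complex.ofReal_mul,
        ← Complex.ofReal_add] <;>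
      norm_cast <;> nlinarith [hpq]
  · have e00 : (1-s)/2 * p + (-((1-s)/2)) * q = (1 + g)/2 * p := by
      rw [hpdef, hqdef]; ring
    have e10 : (-((1-s)/2)) * p + (1+s)/2 * q = (1 + g)/2 * q := by
      rw [hpdef, hqdef]; linear_combination (-(1/(4*r))) * hg2
    have e01 : (1-s)/2 * (-q) + (-((1-s)/2)) * p = (1 - g)/2 * (-q) := by
      rw [hpdef, hqdef]; linear_combination (-(1/(4*r))) * hg2
    have e11 : (-((1-s)/2)) * (-q) + (1+s)/2 * p = (1 - g)/2 * p := by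
      rw [hpdef, hqdef]; ring
    ext i j
    fin_cases i <;> fin_cases j <;>
      simp only [Matrix.mul_apply, Fin.sum_univ_two, Matrix.mul_diagonal, Matrix.cons_val',
        Matrix.cons_val_zero, Matrix.cons_val_one, Matrix.head_cons, Matrix.head_fin_const,
        Matrix.empty_val', Matrix.cons_val_fin_one, Matrix.of_apply] <;>
      norm_num <;>
      [(have hh := congrArg (fun x : ℝ => (x : ℂ)) (by linarith [e00] : (1-s)/2 * p + -((1-s)/2 * q) = p * ((1+g)/2)); push_cast at hh; linear_combination hh);
       (have hh := congrArg (fun x : ℝ => (x : ℂ)) (by linarith [e01] : -((1-s)/2 * q) + -((1-s)/2 * p) = -(q * ((1-g)/2))); push_cast at hh; linear_combination hh);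
       (have hh := congrArg (fun x : ℝ => (x : ℂ)) (by linarith [e10] : -((1-s)/2 * p) + (1+s)/2 * q = q * ((1+g)/2)); push_cast at hh; linear_combination hh);
       (have hh := congrArg (fun x : ℝ => (x : ℂ)) (by linarith [e11] : (1-s)/2 * q + (1+s)/2 * p = p * ((1-g)/2)); push_cast at hh; linear_combination hh)]

set_option maxHeartbeats 2000000 in
/-- for `H^B_s = Σ_{k=1}^n (h_s)_k` with `h_s = (1−s)|−⟩⟨−| + s|1⟩⟨1|`, the
eigenvalues of `H^B_s` are exactly `λ_ℓ(s) = (n−ℓ)λ₊(s) + ℓλ₋(s)`, `ℓ ∈ {0,…,n}`, where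
`λ±(s) = (1 ± √(1−2s+2s²))/2`; the spectral gap of `H^B_s` is `√(1−2s+2s²)`, and the
minimum of this gap over `s ∈ [0,1]` equals `1/√2`. -/
theorem stmt_3 (n : ℕ) (hn : 1 ≤ n) (minus one : Fin 2 → ℂ)
    (hminus : minus = ![(((Real.sqrt 2)⁻¹ : ℝ) : ℂ), ((-(Real.sqrt 2)⁻¹ : ℝ) : ℂ)])
    (hone : one = ![0, 1])
    (h : ℝ → Matrix (Fin 2) (Fin 2) ℂ)
    (hdef : ∀ s : ℝ, h s = ((1 - s : ℝ) : ℂ) • Matrix.vecMulVec minus (star minus)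
      + ((s : ℝ) : ℂ) • Matrix.vecMulVec one (star one))
    (HB : ℝ → Matrix (Fin n → Fin 2) (Fin n → Fin 2) ℂ)
    (hHB : ∀ s : ℝ, HB s = ∑ k : Fin n, onQubit n k (h s))
    (hherm : ∀ s : ℝ, (HB s).IsHermitian)
    (lamp lamm : ℝ → ℝ)
    (hlamp : ∀ s, lamp s = (1 + Real.sqrt (1 - 2 * s + 2 * s ^ 2)) / 2)
    (hlamm : ∀ s, lamm s = (1 - Real.sqrt (1 - 2 * s + 2 * s ^ 2)) / 2) :
    (∀ s ∈ Set.Icc (0 : ℝ) 1,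
      {μ : ℝ | ∃ v : (Fin n → Fin 2) → ℂ, v ≠ 0 ∧ (HB s).mulVec v = (μ : ℂ) • v}
        = {μ : ℝ | ∃ ℓ : ℕ, ℓ ≤ n ∧ μ = ((n : ℝ) - ℓ) * lamp s + (ℓ : ℝ) * lamm s}) ∧
    (∀ s ∈ Set.Icc (0 : ℝ) 1,
      sortedEigs (hherm s) ⟨1, by simpa using Nat.one_lt_two_pow_iff.mpr (by omega)⟩ -
          sortedEigs (hherm s) ⟨0, by simp⟩ = Real.sqrt (1 - 2 * s + 2 * s ^ 2)) ∧
    sortedEigs (hherm (1 / 2)) ⟨1, by simpa using Nat.one_lt_two_pow_iff.mpr (by omega)⟩ -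
        sortedEigs (hherm (1 / 2)) ⟨0, by simp⟩ = 1 / Real.sqrt 2 ∧
    ∀ s ∈ Set.Icc (0 : ℝ) 1,
      1 / Real.sqrt 2 ≤
        sortedEigs (hherm s) ⟨1, by simpa using Nat.one_lt_two_pow_iff.mpr (by omega)⟩ -
          sortedEigs (hherm s) ⟨0, by simp⟩ := by
  have key : ∀ s : ℝ,
      ({μ : ℝ | ∃ v : (Fin n → Fin 2) → ℂ, v ≠ 0 ∧ (HB s).mulVec v = (μ : ℂ) • v}
        = {μ : ℝ | ∃ ℓ : ℕ, ℓ ≤ n ∧ μ = ((n : ℝ) - ℓ) * lamp s + (ℓ : ℝ) * lamm s}) ∧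
      (∀ j0 j1 : Fin (Fintype.card (Fin n → Fin 2)), (j0 : ℕ) = 0 → (j1 : ℕ) = 1 →
        sortedEigs (hherm s) j1 - sortedEigs (hherm s) j0
          = Real.sqrt (1 - 2 * s + 2 * s ^ 2)) := by
    intro s
    set g := Real.sqrt (1 - 2*s + 2*s^2) with hgdef
    have hd : (0:ℝ) ≤ 1 - 2*s + 2*s^2 := by nlinarith [sq_nonneg (2*s-1)]
    have hg2 : g^2 = 1 - 2*s + 2*s^2 := Real.sq_sqrt hd
    have hg0 : 0 ≤ g := Real.sqrt_nonneg _
    have hgpos : 0 < g := by nlinarith [sq_nonneg (2*s-1)]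
    -- the concrete form of `h s`
    have h2r : ((Real.sqrt 2)⁻¹ : ℝ) * ((Real.sqrt 2)⁻¹ : ℝ) = 1/2 := by
      rw [← mul_inv, Real.mul_self_sqrt (by norm_num : (0:ℝ) ≤ 2)]
      norm_num
    have hc2 : ((Real.sqrt 2 : ℝ) : ℂ)⁻¹ * ((Real.sqrt 2 : ℝ) : ℂ)⁻¹ = 1/2 := by
      have := congrArg (fun x : ℝ => (x : ℂ)) h2r
      push_cast at this
      exact this
    have hmeq : h s = !![(((1-s)/2 : ℝ) : ℂ), ((-((1-s)/2) : ℝ) : ℂ);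
          ((-((1-s)/2) : ℝ) : ℂ), (((1+s)/2 : ℝ) : ℂ)] := by
      rw [hdef, hminus, hone]
      ext i j
      fin_cases i <;> fin_cases j <;>
        simp only [Matrix.add_apply, Matrix.smul_apply, Matrix.vecMulVec_apply] <;>
        simp [Matrix.vecMulVec_apply, Matrix.add_apply, Pi.star_apply, Complex.conj_ofReal,
          ← Complex.ofReal_mul] <;>
        push_cast <;>
        first
          | linear_combination (1-(s:ℂ)) * hc2
          | linear_combination (-(1-(s:ℂ))) * hc2
          | linear_combination ((s:ℂ)-1) * hc2
    obtain ⟨U1, hU1unit, hcommraw⟩ := aux_2x2 s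
    set lamR : Fin 2 → ℝ := fun t => if t = (0 : Fin 2) then (1+g)/2 else (1-g)/2 with hlamR
    have hcomm' : h s * U1 = U1 * Matrix.diagonal (fun t : Fin 2 => ((lamR t : ℝ) : ℂ)) := by
      rw [hmeq]
      exact hcommraw
    have hBUunit : (bigU n U1)ᴴ * bigU n U1 = 1 := aux_bigU_unitary n U1 hU1unit
    have hBUunit' : bigU n U1 * (bigU n U1)ᴴ = 1 := mul_eq_one_comm.mp hBUunit
    set μf : (Fin n → Fin 2) → ℝ := fun y => ∑ k, lamR (y k) with hμf
    have hdiagsum : (∑ k : Fin n,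
          Matrix.diagonal (fun y : Fin n → Fin 2 => ((lamR (y k) : ℝ) : ℂ)))
        = Matrix.diagonal (fun y : Fin n → Fin 2 => ((μf y : ℝ) : ℂ)) := by
      ext a b
      rw [Matrix.sum_apply]
      by_cases hab : a = b
      · subst hab
        simp only [Matrix.diagonal_apply_eq, hμf]
        push_cast
        rfl
      · simp [Matrix.diagonal_apply_ne _ hab]
    have hHBU : HB s * bigU n U1
        = bigU n U1 * Matrix.diagonal (fun y : Fin n → Fin 2 => ((μf y : ℝ) : ℂ)) := by
      rw [hHB s, Finset.sum_mul, ← hdiagsum, Finset.mul_sum]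
      exact Finset.sum_congr rfl fun k _ =>
        aux_onQubit_mul_bigU n k (h s) U1 (fun t => ((lamR t : ℝ) : ℂ)) hcomm'
    have hdiag : HB s = bigU n U1
        * Matrix.diagonal (fun y : Fin n → Fin 2 => ((μf y : ℝ) : ℂ)) * (bigU n U1)ᴴ := by
      calc HB s = HB s * (bigU n U1 * (bigU n U1)ᴴ) := by rw [hBUunit', Matrix.mul_one]
        _ = (HB s * bigU n U1) * (bigU n U1)ᴴ := by rw [Matrix.mul_assoc]
        _ = _ := by rw [hHBU]
    -- counting
    set cnt : (Fin n → Fin 2) → ℕ :=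
      fun y => (Finset.univ.filter (fun k => y k = 1)).card with hcnt
    have hcnt_le : ∀ y, cnt y ≤ n := by
      intro y
      simp only [hcnt]
      calc (Finset.univ.filter (fun k => y k = 1)).card
          ≤ Finset.univ.card := Finset.card_filter_le _ _
        _ = n := by simp
    have hmu_eq : ∀ y, μf y = ((n:ℝ) - cnt y) * ((1+g)/2) + (cnt y : ℝ) * ((1-g)/2) := by
      intro y
      rw [hμf]
      simp only []
      rw [← Finset.sum_filter_add_sum_filter_not Finset.univ (fun k => y k = 1)]
      have h1 : ∀ k ∈ Finset.univ.filter (fun k => y k = 1), lamR (y k) = (1-g)/2 := by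
        intro k hk
        have := (Finset.mem_filter.1 hk).2
        rw [hlamR]
        simp only [this]
        norm_num
      have h2 : ∀ k ∈ Finset.univ.filter (fun k => ¬ y k = 1), lamR (y k) = (1+g)/2 := by
        intro k hk
        have h' := (Finset.mem_filter.1 hk).2
        have h0 : y k = 0 := by
          have hv := (y k).isLt
          have hne : (y k : ℕ) ≠ 1 := fun hcn => h' (Fin.ext hcn)
          apply Fin.ext
          simp only [Fin.val_zero]
          omega
        rw [hlamR]
        simp only [h0]
        norm_num
      rw [Finset.sum_congr rfl h1, Finset.sum_congr rfl h2, Finset.sum_const, Finset.sum_const]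
      have hcards := Finset.card_filter_add_card_filter_not
        (s := Finset.univ) (p := fun k : Fin n => y k = 1)
      have huniv : (Finset.univ : Finset (Fin n)).card = n := by simp
      have hnotcard : (Finset.univ.filter (fun k : Fin n => ¬ y k = 1)).card = n - cnt y := by
        have hfold0 : cnt y = (Finset.univ.filter (fun k : Fin n => y k = 1)).card := rfl
        omega
      have hfold : (Finset.univ.filter (fun k => y k = 1)).card = cnt y := rfl
      rw [hnotcard, nsmul_eq_mul, nsmul_eq_mul, Nat.cast_sub (hcnt_le y), hfold]
      ring
    have hmu_eq2 : ∀ y, μf y = (n:ℝ) * ((1-g)/2) + ((n:ℝ) - cnt y) * g := by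
      intro y
      rw [hmu_eq y]
      ring
    have hex : ∀ ℓ : ℕ, ℓ ≤ n → ∃ x : Fin n → Fin 2, cnt x = ℓ := by
      intro ℓ hℓ
      refine ⟨fun j => if (j:ℕ) < ℓ then 1 else 0, ?_⟩
      simp only [hcnt]
      have hfeq : (Finset.univ.filter
            (fun k : Fin n => (if (k:ℕ) < ℓ then (1 : Fin 2) else 0) = 1))
          = Finset.univ.filter (fun k : Fin n => (k:ℕ) < ℓ) := by
        apply Finset.filter_congr
        intro k _
        by_cases hk : (k:ℕ) < ℓ
        · simp [hk]
        · simp [hk, Fin.ext_iff]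
      rw [hfeq, aux_card n ℓ hℓ]
    constructor
    · -- the set of eigenvalues
      ext μ'
      simp only [Set.mem_setOf_eq]
      have hiff : (∃ v : (Fin n → Fin 2) → ℂ, v ≠ 0 ∧ (HB s).mulVec v = (μ' : ℂ) • v)
          ↔ ((μ' : ℂ) • (1 : Matrix (Fin n → Fin 2) (Fin n → Fin 2) ℂ) - HB s).det = 0 := by
        rw [← Matrix.exists_mulVec_eq_zero_iff]
        apply exists_congr
        intro v
        constructor
        · rintro ⟨hv, hEq⟩
          refine ⟨hv, ?_⟩
          rw [Matrix.sub_mulVec, Matrix.smul_mulVec, Matrix.one_mulVec, hEq, sub_self]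
        · rintro ⟨hv, hEq⟩
          refine ⟨hv, ?_⟩
          rw [Matrix.sub_mulVec, Matrix.smul_mulVec, Matrix.one_mulVec] at hEq
          exact (sub_eq_zero.mp hEq).symm
      have hdet : ((μ' : ℂ) • (1 : Matrix (Fin n → Fin 2) (Fin n → Fin 2) ℂ) - HB s).det
          = ∏ x : Fin n → Fin 2, ((μ' : ℂ) - ((μf x : ℝ) : ℂ)) := by
        conv_lhs => rw [hdiag]
        exact aux_det_conj (bigU n U1) hBUunit' _ (μ' : ℂ)
      rw [hiff, hdet, Finset.prod_eq_zero_iff]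
      constructor
      · rintro ⟨x, -, hx⟩
        have hxc : (μ' : ℂ) = ((μf x : ℝ) : ℂ) := sub_eq_zero.mp hx
        have hμx : μ' = μf x := by exact_mod_cast hxc
        refine ⟨cnt x, hcnt_le x, ?_⟩
        rw [hμx, hmu_eq x, hlamp, hlamm, ← hgdef]
      · rintro ⟨ℓ, hℓ, hμ⟩
        obtain ⟨x, hx⟩ := hex ℓ hℓ
        refine ⟨x, Finset.mem_univ x, ?_⟩
        rw [sub_eq_zero]
        have hval : μ' = μf x := by
          rw [hμ, hmu_eq x, hx, hlamp, hlamm, ← hgdef]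
        exact_mod_cast congrArg (fun x : ℝ => (x : ℂ)) hval
    · -- the gap
      intro j0 j1 hj0 hj1
      have hms := aux_eig_multiset (hherm s) (bigU n U1) hBUunit'
        (fun y => μf y) hdiag
      have hmono : Monotone (sortedEigs (hherm s)) := Tuple.monotone_sort _
      have hsm : Multiset.map (sortedEigs (hherm s)) Finset.univ.val
          = Multiset.map (fun y => μf y) Finset.univ.val := by
        rw [← hms]
        exact aux_equiv_multiset (hherm s).eigenvalues₀
          (Tuple.sort (hherm s).eigenvalues₀)
      set M := Multiset.map (fun y => μf y) Finset.univ.val with hM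
      set mval : ℝ := (n:ℝ) * ((1-g)/2) with hmval
      have hmu_one : μf (fun _ => (1 : Fin 2)) = mval := by
        rw [hmu_eq2]
        have : cnt (fun _ => (1 : Fin 2)) = n := by
          simp [hcnt]
        rw [this, hmval]
        ring
      have hmm : mval ∈ M := by
        rw [hM]
        exact Multiset.mem_map.2 ⟨fun _ => 1, by simp, hmu_one⟩
      have hbm : mval + g ∈ M := by
        obtain ⟨x, hx⟩ := hex (n-1) (Nat.sub_le n 1)
        rw [hM]
        refine Multiset.mem_map.2 ⟨x, by simp, ?_⟩
        rw [hmu_eq2 x, hx, hmval, Nat.cast_sub hn]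
        push_cast
        ring
      have hmbb : mval < mval + g := by linarith
      have hcount : Multiset.count mval M = 1 := by
        have hcc : Multiset.count mval M
            = (Finset.univ.filter (fun y : Fin n → Fin 2 => mval = μf y)).card := by
          rw [hM, Multiset.count_map]
          rfl
        have hsing : Finset.univ.filter (fun y : Fin n → Fin 2 => mval = μf y)
            = {fun _ => (1 : Fin 2)} := by
          ext y
          simp only [Finset.mem_filter, Finset.mem_univ, true_and, Finset.mem_singleton]
          constructor
          · intro hy
            have h1 : ((n:ℝ) - cnt y) * g = 0 := by
              rw [hmu_eq2 y] at hy
              rw [hmval] at hy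
              linarith
            have h2 : (cnt y : ℝ) = (n : ℝ) := by
              rcases mul_eq_zero.1 h1 with h | h
              · linarith
              · linarith
            have h3 : cnt y = n := by exact_mod_cast h2
            have h4 : Finset.univ.filter (fun k => y k = 1) = Finset.univ := by
              apply Finset.eq_univ_of_card
              rw [show (Finset.univ.filter (fun k => y k = 1)).card = cnt y from rfl, h3]
              simp
            funext k
            have : k ∈ Finset.univ.filter (fun k => y k = 1) := by
              rw [h4]; exact Finset.mem_univ k
            exact (Finset.mem_filter.1 this).2
          · rintro rfl
            exact hmu_one.symm
        rw [hcc, hsing, Finset.card_singleton]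
      have hall : ∀ a ∈ M, a = mval ∨ mval + g ≤ a := by
        intro a ha
        obtain ⟨y, hy, rfl⟩ := Multiset.mem_map.1 ha
        by_cases hc : cnt y = n
        · left
          rw [hmu_eq2 y, hc, hmval]
          push_cast
          ring
        · right
          rw [hmu_eq2 y]
          have hle1 : cnt y ≤ n - 1 := by
            have := hcnt_le y
            omega
          have hle2 : (cnt y : ℝ) ≤ (n:ℝ) - 1 := by
            have h' : (cnt y : ℝ) ≤ ((n - 1 : ℕ) : ℝ) := Nat.cast_le.2 hle1
            rwa [Nat.cast_sub hn, Nat.cast_one] at h'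
          nlinarith
      obtain ⟨hφ0, hφ1⟩ := aux_sorted_entries (sortedEigs (hherm s)) hmono M hsm
        mval (mval + g) hmbb hmm hbm hcount hall j0 j1 hj0 hj1
      rw [hφ1, hφ0, hgdef]
      ring
  have hhalf : (1:ℝ) / Real.sqrt 2 = Real.sqrt (1/2) := by
    rw [one_div, show (1:ℝ)/2 = 2⁻¹ by norm_num, Real.sqrt_inv]
  refine ⟨fun s _ => (key s).1, fun s _ => (key s).2 _ _ rfl rfl, ?_, ?_⟩
  · rw [(key (1/2)).2 _ _ rfl rfl, hhalf]
    norm_num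
  · intro s _
    rw [(key s).2 _ _ rfl rfl, hhalf]
    apply Real.sqrt_le_sqrt
    nlinarith [sq_nonneg (2*s-1)]
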